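/- Let $X$ be a compact metric space and $f:X\to X$ a continuous surjective map. If for every sequence $(x_i)_{i\ge0}$ in $X$ with $\lim_{n\to\infty}\frac{1}{n}\sum_{i=0}^{n-1}d(f(x_i),x_{i+1})=0$ there exists $x\in X$ with $\lim_{n\to\infty}\frac{1}{n}\sum_{i=0}^{n-1}d(f^i(x),x_i)=0$ (the asymptotic average shadowing property), then $f$ is chain mixing. -/

import Mathlib

open Filter Metric Set
open scoped Classical Topology

noncomputable def upperDensity (A : Set ℕ) : ℝ :=
  Filter.limsup
    (fun n : ℕ => (((Finset.range n).filter (fun i => i ∈ A)).card : ℝ) / n) Filter.atTop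

def HasDensityOne (A : Set ℕ) : Prop :=
  Filter.Tendsto
    (fun n : ℕ => (((Finset.range n).filter (fun i => i ∈ A)).card : ℝ) / n) Filter.atTop (nhds 1)

def omegaBarSeq {X : Type*} [MetricSpace X] (x : ℕ → X) : Set X :=
  {y | ∀ ε > 0, 0 < upperDensity {i | dist (x i) y < ε}}

def omegaBar {X : Type*} [MetricSpace X] (f : X → X) (x : X) : Set X :=
  omegaBarSeq (fun i => f^[i] x)

/-- Stage start times: `stT (n+1) = 7 * stT n + 7`. -/
def stT : ℕ → ℕ
  | 0 => 0
  | n + 1 => 7 * stT n + 7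

lemma stT_succ (n : ℕ) : stT (n + 1) = 7 * stT n + 7 := rfl

lemma stT_strictMono : StrictMono stT := by
  apply strictMono_nat_of_lt_succ
  intro n; rw [stT_succ]; omega

lemma stT_le_self (n : ℕ) : n ≤ stT n := stT_strictMono.le_apply

lemma pow_le_stT (n : ℕ) : 7 ^ n ≤ stT n + 1 := by
  induction n with
  | zero => simp [stT]
  | succ n ih => rw [stT_succ, pow_succ]; omega

lemma sq_le_stT (n : ℕ) : n * n < stT n + 1 := by
  have h1 : n < 2 ^ n := Nat.lt_two_pow_self
  have h2 : n * n < 2 ^ n * 2 ^ n := by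
    rcases Nat.eq_zero_or_pos n with h | h
    · subst h; simp
    · exact Nat.mul_lt_mul_of_lt_of_lt h1 h1
  have h3 : 2 ^ n * 2 ^ n ≤ 7 ^ n := by
    rw [← pow_add]
    calc 2 ^ (n + n) = 4 ^ n := by rw [show (4:ℕ) = 2^2 by norm_num, ← pow_mul]; ring_nf
    _ ≤ 7 ^ n := Nat.pow_le_pow_left (by norm_num) n
  exact lt_of_lt_of_le (lt_of_lt_of_le h2 h3) (pow_le_stT n)

/-- Stage of an index. -/
def stOf (i : ℕ) : ℕ := Nat.findGreatest (fun n => stT n ≤ i) i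

lemma stOf_le (i : ℕ) : stT (stOf i) ≤ i :=
  Nat.findGreatest_spec (P := fun n => stT n ≤ i) (Nat.zero_le i) (by simp [stT])

lemma stOf_lt (i : ℕ) : i < stT (stOf i + 1) := by
  by_contra h
  push_neg at h
  have h1 : stOf i + 1 ≤ i := le_trans (stT_le_self _) h
  have := Nat.le_findGreatest (P := fun n => stT n ≤ i) h1 h
  simp only [stOf] at this
  omega

lemma stOf_eq {n i : ℕ} (h1 : stT n ≤ i) (h2 : i < stT (n + 1)) : stOf i = n := by
  have hle : n ≤ stOf i := Nat.le_findGreatest (le_trans (stT_le_self n) h1) h1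
  have : stOf i ≤ n := by
    by_contra h
    push_neg at h
    have := stT_strictMono.monotone (show n + 1 ≤ stOf i from h)
    have := stOf_le i
    omega
  omega
open Filter Metric Set
open scoped Classical Topology
section
variable {X : Type*} [MetricSpace X]

/-- Values within one stage of the pseudo-orbit. -/
noncomputable def blockV (f : X → X) (x y : X) (g : ℕ → X) (M r : ℕ) : X :=
  if r < M then f^[r] x
  else if r < 2 * M then g (2 * M - 1 - r)
  else if r < 3 * M then f^[r - 2 * M] y
  else if r < 4 * M then g (4 * M - 1 - r)
  else if r < 5 * M then f^[r - 4 * M] y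
  else g (6 * M - r)
end

section
variable {X : Type*} [MetricSpace X]

/-- The asymptotic-average pseudo-orbit. -/
noncomputable def pz (f : X → X) (x y : X) (g : ℕ → X) (i : ℕ) : X :=
  blockV f x y g (stT (stOf i) + 1) (i - stT (stOf i))

variable (f : X → X) (x y : X) (g : ℕ → X)

lemma pz_eval {n r : ℕ} (hr : r < 6 * (stT n + 1) + 1) :
    pz f x y g (stT n + r) = blockV f x y g (stT n + 1) r := by
  have h : stOf (stT n + r) = n :=
    stOf_eq (Nat.le_add_right _ _) (by rw [stT_succ]; omega)
  simp [pz, h]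

lemma pz_step (hg : ∀ k, f (g (k + 1)) = g k) {n r : ℕ}
    (hr : r + 1 < 6 * (stT n + 1) + 1)
    (hnb : ∀ k, 1 ≤ k → k ≤ 5 → r + 1 ≠ k * (stT n + 1)) :
    f (pz f x y g (stT n + r)) = pz f x y g (stT n + r + 1) := by
  set M := stT n + 1 with hM
  have e1 : pz f x y g (stT n + r) = blockV f x y g M r := pz_eval f x y g (by omega)
  have e2 : pz f x y g (stT n + r + 1) = blockV f x y g M (r + 1) := by
    rw [show stT n + r + 1 = stT n + (r + 1) by omega]
    exact pz_eval f x y g (by omega)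
  rw [e1, e2]
  have hM1 : 1 ≤ M := by omega
  rcases lt_or_ge r M with h0 | h0
  · -- block 0
    have h0' : r + 1 < M := by
      have := hnb 1 le_rfl (by norm_num); omega
    rw [blockV, if_pos h0, blockV, if_pos h0']; exact (Function.iterate_succ_apply' f _ _).symm
  rcases lt_or_ge r (2 * M) with h1 | h1
  · have h1' : r + 1 < 2 * M := by
      have := hnb 2 (by norm_num) (by norm_num); omega
    rw [blockV, if_neg (by omega), if_pos h1, blockV, if_neg (by omega), if_pos h1']
    rw [show 2 * M - 1 - r = (2 * M - 1 - (r + 1)) + 1 by omega]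
    exact hg _
  rcases lt_or_ge r (3 * M) with h2 | h2
  · have h2' : r + 1 < 3 * M := by
      have := hnb 3 (by norm_num) (by norm_num); omega
    rw [blockV, if_neg (by omega), if_neg (by omega), if_pos h2,
        blockV, if_neg (by omega), if_neg (by omega), if_pos h2']
    rw [show r + 1 - 2 * M = (r - 2 * M) + 1 by omega]; exact (Function.iterate_succ_apply' f _ _).symm
  rcases lt_or_ge r (4 * M) with h3 | h3
  · have h3' : r + 1 < 4 * M := by
      have := hnb 4 (by norm_num) (by norm_num); omega
    rw [blockV, if_neg (by omega), if_neg (by omega), if_neg (by omega), if_pos h3,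
        blockV, if_neg (by omega), if_neg (by omega), if_neg (by omega), if_pos h3']
    rw [show 4 * M - 1 - r = (4 * M - 1 - (r + 1)) + 1 by omega]
    exact hg _
  rcases lt_or_ge r (5 * M) with h4 | h4
  · have h4' : r + 1 < 5 * M := by
      have := hnb 5 (by norm_num) (by norm_num); omega
    rw [blockV, if_neg (by omega), if_neg (by omega), if_neg (by omega), if_neg (by omega),
        if_pos h4, blockV, if_neg (by omega), if_neg (by omega), if_neg (by omega),
        if_neg (by omega), if_pos h4']
    rw [show r + 1 - 4 * M = (r - 4 * M) + 1 by omega]; exact (Function.iterate_succ_apply' f _ _).symm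
  · have h5 : r + 1 ≤ 6 * M := by omega
    rw [blockV, if_neg (by omega), if_neg (by omega), if_neg (by omega), if_neg (by omega),
        if_neg (by omega), blockV, if_neg (by omega), if_neg (by omega), if_neg (by omega),
        if_neg (by omega), if_neg (by omega)]
    rw [show 6 * M - r = (6 * M - (r + 1)) + 1 by omega]
    exact hg _
end

section
variable {X : Type*} [MetricSpace X] (f : X → X) (x y : X) (g : ℕ → X) {M r : ℕ}

lemma blockV0 (h : r < M) : blockV f x y g M r = f^[r] x := if_pos h

lemma blockV1 (h1 : M ≤ r) (h2 : r < 2 * M) :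
    blockV f x y g M r = g (2 * M - 1 - r) := by
  rw [blockV, if_neg (by omega), if_pos h2]

lemma blockV2 (h1 : 2 * M ≤ r) (h2 : r < 3 * M) :
    blockV f x y g M r = f^[r - 2 * M] y := by
  rw [blockV, if_neg (by omega), if_neg (by omega), if_pos h2]

lemma blockV3 (h1 : 3 * M ≤ r) (h2 : r < 4 * M) :
    blockV f x y g M r = g (4 * M - 1 - r) := by
  rw [blockV, if_neg (by omega), if_neg (by omega), if_neg (by omega), if_pos h2]

lemma blockV4 (h1 : 4 * M ≤ r) (h2 : r < 5 * M) :
    blockV f x y g M r = f^[r - 4 * M] y := by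
  rw [blockV, if_neg (by omega), if_neg (by omega), if_neg (by omega), if_neg (by omega),
    if_pos h2]

lemma blockV5 (h1 : 5 * M ≤ r) : blockV f x y g M r = g (6 * M - r) := by
  rw [blockV, if_neg (by omega), if_neg (by omega), if_neg (by omega), if_neg (by omega),
    if_neg (by omega)]

end

section
variable {X : Type*} [MetricSpace X]

lemma chain_concat (f : X → X) (δ : ℝ) {u v w : X} {k1 k2 : ℕ}
    (h1 : ∃ c : ℕ → X, c 0 = u ∧ c k1 = v ∧ ∀ i < k1, dist (f (c i)) (c (i + 1)) ≤ δ)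
    (h2 : ∃ c : ℕ → X, c 0 = v ∧ c k2 = w ∧ ∀ i < k2, dist (f (c i)) (c (i + 1)) ≤ δ) :
    ∃ c : ℕ → X, c 0 = u ∧ c (k1 + k2) = w ∧
      ∀ i < k1 + k2, dist (f (c i)) (c (i + 1)) ≤ δ := by
  obtain ⟨c1, hc10, hc11, hc1s⟩ := h1
  obtain ⟨c2, hc20, hc21, hc2s⟩ := h2
  refine ⟨fun t => if t < k1 then c1 t else c2 (t - k1), ?_, ?_, ?_⟩
  · show (if (0:ℕ) < k1 then c1 0 else c2 (0 - k1)) = u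
    rcases Nat.eq_zero_or_pos k1 with h | h
    · rw [if_neg (by omega), show (0:ℕ) - k1 = 0 by omega, hc20, ← hc11, h, hc10]
    · rw [if_pos h, hc10]
  · simp only [if_neg (by omega : ¬ k1 + k2 < k1)]
    rw [show k1 + k2 - k1 = k2 by omega]; exact hc21
  · intro i hi
    rcases lt_or_ge i k1 with h | h
    · rcases lt_or_ge (i + 1) k1 with h' | h'
      · simpa only [if_pos h, if_pos h'] using hc1s i h
      · have hik : i + 1 = k1 := by omega
        simp only [if_pos h, if_neg (by omega : ¬ i + 1 < k1)]
        rw [show i + 1 - k1 = 0 by omega, hc20, ← hc11, ← hik]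
        exact hc1s i h
    · have hci : (if i < k1 then c1 i else c2 (i - k1)) = c2 (i - k1) := if_neg (by omega)
      simp only [hci, if_neg (by omega : ¬ i + 1 < k1)]
      rw [show i + 1 - k1 = (i - k1) + 1 by omega]
      exact hc2s (i - k1) (by omega)

lemma chain_pow (f : X → X) (δ : ℝ) {v : X} {m : ℕ}
    (h : ∃ c : ℕ → X, c 0 = v ∧ c m = v ∧ ∀ i < m, dist (f (c i)) (c (i + 1)) ≤ δ) :
    ∀ α : ℕ, ∃ c : ℕ → X, c 0 = v ∧ c (α * m) = v ∧
      ∀ i < α * m, dist (f (c i)) (c (i + 1)) ≤ δ := by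
  intro α
  induction α with
  | zero => exact ⟨fun _ => v, rfl, rfl, by omega⟩
  | succ α ih =>
      have := chain_concat f δ ih h
      rwa [show α * m + m = (α + 1) * m by ring] at this

lemma buildChain (f : X → X) {δ ε : ℝ} (hδ : 0 ≤ δ)
    (hunif : ∀ a b : X, dist a b < ε → dist (f a) (f b) ≤ δ)
    {g : ℕ → X} (hg : ∀ k, f (g (k + 1)) = g k)
    (p w : X) {a b j m : ℕ} (hab : a < b) (hm : 1 ≤ m)
    (ha : dist (f^[a] p) (f^[j] w) < ε) (hb : dist (f^[b] p) (g m) < ε) :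
    ∃ c : ℕ → X, c 0 = w ∧ c (j + (b - a) + m) = g 0 ∧
      ∀ i < j + (b - a) + m, dist (f (c i)) (c (i + 1)) ≤ δ := by
  set c : ℕ → X := fun t =>
    if t ≤ j then f^[t] w
    else if t ≤ j + (b - a) then f^[a + (t - j)] p
    else g (m - (t - (j + (b - a)))) with hc
  refine ⟨c, by simp [hc], ?_, ?_⟩
  · have h1 : ¬ (j + (b - a) + m ≤ j) := by omega
    have h2 : ¬ (j + (b - a) + m ≤ j + (b - a)) := by omega
    simp only [hc, if_neg h1, if_neg h2]
    rw [show m - (j + (b - a) + m - (j + (b - a))) = 0 by omega]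
  · intro i hi
    rcases lt_trichotomy i j with h | h | h
    · have e1 : c i = f^[i] w := if_pos (le_of_lt h)
      have e2 : c (i + 1) = f^[i + 1] w := if_pos h
      rw [e1, e2, ← Function.iterate_succ_apply' f i w]
      simp [hδ]
    · subst h
      have e1 : c i = f^[i] w := if_pos le_rfl
      have e2 : c (i + 1) = f^[a + 1] p := by
        simp only [hc]
        rw [if_neg (by omega), if_pos (by omega), show i + 1 - i = 1 by omega]
      rw [e1, e2, Function.iterate_succ_apply' f a p]
      exact hunif _ _ (by rw [dist_comm]; exact ha)
    · rcases lt_trichotomy i (j + (b - a)) with h' | h' | h'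
      · have e1 : c i = f^[a + (i - j)] p := by
          simp only [hc]; rw [if_neg (by omega), if_pos (by omega)]
        have e2 : c (i + 1) = f^[(a + (i - j)) + 1] p := by
          simp only [hc]
          rw [if_neg (by omega), if_pos (by omega), show i + 1 - j = (i - j) + 1 by omega,
            show a + ((i - j) + 1) = (a + (i - j)) + 1 by omega]
        rw [e1, e2, ← Function.iterate_succ_apply' f _ p]
        simp [hδ]
      · have e1 : c i = f^[b] p := by
          simp only [hc]
          rw [if_neg (by omega), if_pos (by omega), h',
            show j + (b - a) - j = b - a by omega, show a + (b - a) = b by omega]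
        have e2 : c (i + 1) = g (m - 1) := by
          simp only [hc]
          rw [if_neg (by omega), if_neg (by omega), h',
            show j + (b - a) + 1 - (j + (b - a)) = 1 by omega]
        have hgm : f (g m) = g (m - 1) := by
          conv_lhs => rw [show m = (m - 1) + 1 by omega]
          exact hg _
        rw [e1, e2, ← hgm]
        exact hunif _ _ hb
      · have hs1 : 1 ≤ i - (j + (b - a)) := by omega
        have hs2 : i - (j + (b - a)) < m := by omega
        have e1 : c i = g (m - (i - (j + (b - a)))) := by
          simp only [hc]; rw [if_neg (by omega), if_neg (by omega)]
        have e2 : c (i + 1) = g (m - (i - (j + (b - a))) - 1) := by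
          simp only [hc]
          rw [if_neg (by omega), if_neg (by omega),
            show i + 1 - (j + (b - a)) = (i - (j + (b - a))) + 1 by omega,
            show m - ((i - (j + (b - a))) + 1) = m - (i - (j + (b - a))) - 1 by omega]
        rw [e1, e2, show m - (i - (j + (b - a))) = (m - (i - (j + (b - a))) - 1) + 1 by omega,
          hg]
        simp [hδ]

end

/-- Boundary encoding map. -/
def emap (q : ℕ × ℕ) : ℕ :=
  if q.2 = 0 then stT (q.1 + 1) else stT q.1 + q.2 * (stT q.1 + 1)

lemma emap_pos (q : ℕ × ℕ) : 1 ≤ emap q := by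
  rcases q with ⟨s, k⟩
  unfold emap
  split
  · rw [stT_succ]; omega
  · rcases Nat.eq_zero_or_pos k with h | h
    · omega
    · have : 1 * (stT s + 1) ≤ k * (stT s + 1) := Nat.mul_le_mul_right _ h
      simp only []
      omega

lemma emap_stT_le (q : ℕ × ℕ) : stT q.1 + 1 ≤ emap q := by
  rcases q with ⟨s, k⟩
  unfold emap
  split
  · rw [stT_succ]; omega
  · rename_i h
    have : 1 * (stT s + 1) ≤ k * (stT s + 1) := Nat.mul_le_mul_right _ (by omega)
    simp only []
    omega

section
variable {X : Type*} [MetricSpace X]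
variable (f : X → X) (x y : X) (g : ℕ → X)

lemma pz_err_support (hg : ∀ k, f (g (k + 1)) = g k) (i : ℕ)
    (h : f (pz f x y g i) ≠ pz f x y g (i + 1)) :
    ∃ q : ℕ × ℕ, q.2 < 6 ∧ stT q.1 ≤ i ∧ i + 1 = emap q := by
  set n := stOf i with hn
  set r := i - stT n with hr
  have h1 : stT n ≤ i := stOf_le i
  have h2 : i < stT (n + 1) := stOf_lt i
  have hi : i = stT n + r := by omega
  have hlen : stT (n + 1) = stT n + (6 * (stT n + 1) + 1) := by rw [stT_succ]; omega
  have hr6 : r + 1 ≤ 6 * (stT n + 1) + 1 := by omega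
  rcases eq_or_lt_of_le hr6 with he | hlt
  · refine ⟨(n, 0), by norm_num, h1, ?_⟩
    have hee : emap (n, 0) = stT (n + 1) := by simp [emap]
    omega
  · by_cases hb : ∀ k, 1 ≤ k → k ≤ 5 → r + 1 ≠ k * (stT n + 1)
    · exfalso
      apply h
      rw [hi]
      exact pz_step f x y g hg hlt hb
    · push_neg at hb
      obtain ⟨k, hk1, hk5, hke⟩ := hb
      refine ⟨(n, k), by omega, h1, ?_⟩
      simp only [emap, if_neg (by omega : ¬ k = 0)]
      omega

lemma pz_err_sum_le {D : ℝ} (hD : 0 ≤ D) (hdist : ∀ a b : X, dist a b ≤ D)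
    (hg : ∀ k, f (g (k + 1)) = g k) (N : ℕ) :
    ∑ i ∈ Finset.range N, dist (f (pz f x y g i)) (pz f x y g (i + 1)) ≤
      ((Nat.sqrt N + 1) * 6 : ℕ) * D := by
  classical
  set z := pz f x y g
  set errf : ℕ → ℝ := fun i => dist (f (z i)) (z (i + 1)) with herrf
  have hsplit : ∑ i ∈ Finset.range N, errf i
      = ∑ i ∈ (Finset.range N).filter (fun i => errf i ≠ 0), errf i :=
    (Finset.sum_filter_ne_zero _).symm
  set K := Nat.sqrt N + 1 with hK
  have hNK : N ≤ stT K := by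
    have h1 := sq_le_stT K
    have h2 : N < K * K := by rw [hK]; exact Nat.lt_succ_sqrt N
    omega
  have hsub : (Finset.range N).filter (fun i => errf i ≠ 0) ⊆
      (Finset.range K ×ˢ Finset.range 6).image (fun q => emap q - 1) := by
    intro i hi
    simp only [Finset.mem_filter, Finset.mem_range] at hi
    obtain ⟨hiN, hne⟩ := hi
    have hz : f (z i) ≠ z (i + 1) := by
      intro hcon
      exact hne (by rw [herrf]; simp [hcon])
    obtain ⟨q, hq6, hqle, hqe⟩ := pz_err_support f x y g hg i hz
    simp only [Finset.mem_image, Finset.mem_product, Finset.mem_range]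
    refine ⟨q, ⟨?_, hq6⟩, by omega⟩
    have : stT q.1 < stT K := by omega
    exact stT_strictMono.lt_iff_lt.mp this
  have hcard : ((Finset.range N).filter (fun i => errf i ≠ 0)).card ≤ K * 6 := by
    calc ((Finset.range N).filter (fun i => errf i ≠ 0)).card
        ≤ ((Finset.range K ×ˢ Finset.range 6).image (fun q => emap q - 1)).card :=
          Finset.card_le_card hsub
      _ ≤ (Finset.range K ×ˢ Finset.range 6).card := Finset.card_image_le
      _ = K * 6 := by simp [Finset.card_product]
  rw [hsplit]
  calc ∑ i ∈ (Finset.range N).filter (fun i => errf i ≠ 0), errf i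
      ≤ ((Finset.range N).filter (fun i => errf i ≠ 0)).card • D :=
        Finset.sum_le_card_nsmul _ _ _ (fun i _ => hdist _ _)
    _ ≤ (K * 6) • D := by
        exact nsmul_le_nsmul_left hD hcard
    _ = ((K * 6 : ℕ) : ℝ) * D := by rw [nsmul_eq_mul]
    _ = ((Nat.sqrt N + 1) * 6 : ℕ) * D := by rw [hK]

end

lemma sqrt_succ_div_tendsto :
    Tendsto (fun N : ℕ => ((Nat.sqrt N + 1 : ℕ) : ℝ) / N) atTop (𝓝 0) := by
  have hsq : Tendsto (fun N : ℕ => Nat.sqrt N) atTop atTop :=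
    Filter.tendsto_atTop_atTop.2 fun b => ⟨b * b, fun n hn => Nat.le_sqrt.2 hn⟩
  have hcast : Tendsto (fun N : ℕ => ((Nat.sqrt N : ℝ))) atTop atTop :=
    tendsto_natCast_atTop_atTop.comp hsq
  have hinv : Tendsto (fun N : ℕ => ((Nat.sqrt N : ℝ))⁻¹) atTop (𝓝 0) :=
    hcast.inv_tendsto_atTop
  have hb : Tendsto (fun N : ℕ => 2 * ((Nat.sqrt N : ℝ))⁻¹) atTop (𝓝 0) := by
    have := hinv.const_mul (2 : ℝ)
    simpa using this
  apply tendsto_of_tendsto_of_tendsto_of_le_of_le' tendsto_const_nhds hb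
  · filter_upwards [eventually_ge_atTop 1] with N hN
    positivity
  · filter_upwards [eventually_ge_atTop 1] with N hN
    have hs1 : 1 ≤ Nat.sqrt N := Nat.le_sqrt.2 (by omega)
    have hNpos : (0 : ℝ) < N := by exact_mod_cast hN
    have hspos : (0 : ℝ) < (Nat.sqrt N : ℝ) := by exact_mod_cast hs1
    rw [show (2 : ℝ) * ((Nat.sqrt N : ℝ))⁻¹ = 2 / (Nat.sqrt N : ℝ) by rw [div_eq_mul_inv]]
    rw [div_le_div_iff₀ hNpos hspos]
    have hnat : (Nat.sqrt N + 1) * Nat.sqrt N ≤ 2 * N := by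
      have h1 := Nat.sqrt_le N
      have h2 := Nat.sqrt_le_self N
      nlinarith
    calc ((Nat.sqrt N + 1 : ℕ) : ℝ) * (Nat.sqrt N : ℝ)
        = (((Nat.sqrt N + 1) * Nat.sqrt N : ℕ) : ℝ) := by push_cast; ring
      _ ≤ ((2 * N : ℕ) : ℝ) := by exact_mod_cast hnat
      _ = 2 * (N : ℝ) := by push_cast; ring

section
variable {X : Type*} [MetricSpace X]

lemma pz_avg_tendsto (f : X → X) (x y : X) (g : ℕ → X)
    (hg : ∀ k, f (g (k + 1)) = g k) {D : ℝ} (hD : 0 ≤ D) (hdist : ∀ a b : X, dist a b ≤ D) :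
    Tendsto (fun n : ℕ =>
      (∑ i ∈ Finset.range n, dist (f (pz f x y g i)) (pz f x y g (i + 1))) / n)
      atTop (𝓝 0) := by
  have hbb : Tendsto (fun N : ℕ => 6 * D * (((Nat.sqrt N + 1 : ℕ) : ℝ) / N)) atTop (𝓝 0) := by
    have := sqrt_succ_div_tendsto.const_mul (6 * D)
    simpa using this
  apply tendsto_of_tendsto_of_tendsto_of_le_of_le' tendsto_const_nhds hbb
  · filter_upwards with N
    apply div_nonneg _ (Nat.cast_nonneg N)
    exact Finset.sum_nonneg fun i _ => dist_nonneg
  · filter_upwards [eventually_ge_atTop 1] with N hN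
    have hNpos : (0 : ℝ) < N := by exact_mod_cast hN
    have key := pz_err_sum_le f x y g hD hdist hg N
    calc (∑ i ∈ Finset.range N, dist (f (pz f x y g i)) (pz f x y g (i + 1))) / N
        ≤ (((Nat.sqrt N + 1) * 6 : ℕ) : ℝ) * D / N := by
          exact (div_le_div_iff_of_pos_right hNpos).2 key
      _ = 6 * D * (((Nat.sqrt N + 1 : ℕ) : ℝ) / N) := by push_cast; ring

lemma markov_tendsto (u : ℕ → ℝ) (hu : ∀ i, 0 ≤ u i) {ε : ℝ} (hε : 0 < ε)
    (h : Tendsto (fun n : ℕ => (∑ i ∈ Finset.range n, u i) / n) atTop (𝓝 0)) :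
    Tendsto
      (fun n : ℕ => (((Finset.range n).filter (fun i => ε ≤ u i)).card : ℝ) / n)
      atTop (𝓝 0) := by
  classical
  have hb : Tendsto (fun n : ℕ => ((∑ i ∈ Finset.range n, u i) / n) / ε) atTop (𝓝 0) := by
    simpa using h.div_const ε
  apply tendsto_of_tendsto_of_tendsto_of_le_of_le' tendsto_const_nhds hb
  · filter_upwards with N
    positivity
  · filter_upwards [eventually_ge_atTop 1] with N hN
    have hNpos : (0 : ℝ) < N := by exact_mod_cast hN
    have key : ε * (((Finset.range N).filter (fun i => ε ≤ u i)).card : ℝ)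
        ≤ ∑ i ∈ Finset.range N, u i := by
      calc ε * (((Finset.range N).filter (fun i => ε ≤ u i)).card : ℝ)
          = (((Finset.range N).filter (fun i => ε ≤ u i)).card : ℝ) * ε := by ring
        _ = (((Finset.range N).filter (fun i => ε ≤ u i)).card : ℕ) • ε := by
            rw [nsmul_eq_mul]
        _ ≤ ∑ i ∈ (Finset.range N).filter (fun i => ε ≤ u i), u i :=
            Finset.card_nsmul_le_sum _ _ _ (fun i hi => (Finset.mem_filter.mp hi).2)
        _ ≤ ∑ i ∈ Finset.range N, u i :=
            Finset.sum_le_sum_of_subset_of_nonneg (Finset.filter_subset _ _)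
              (fun i _ _ => hu i)
    rw [div_div, div_le_div_iff₀ hNpos (by positivity)]
    nlinarith [key, hNpos]

end

theorem stmt17 {X : Type*} [MetricSpace X] [CompactSpace X] (f : X → X) (hf : Continuous f)
    (hsurj : Function.Surjective f)
    (haasp : ∀ x : ℕ → X,
      Filter.Tendsto (fun n : ℕ => (∑ i ∈ Finset.range n, dist (f (x i)) (x (i + 1))) / n)
        Filter.atTop (nhds 0) →
      ∃ z : X, Filter.Tendsto (fun n : ℕ => (∑ i ∈ Finset.range n, dist (f^[i] z) (x i)) / n)
        Filter.atTop (nhds 0)) :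
    ∀ x y : X, ∀ δ > 0, ∃ N : ℕ, ∀ k ≥ N,
      ∃ c : ℕ → X, c 0 = x ∧ c k = y ∧ ∀ i < k, dist (f (c i)) (c (i + 1)) ≤ δ := by
  intro x y δ hδ
  -- diameter bound
  obtain ⟨D, hD⟩ : ∃ C : ℝ, ∀ a b : X, dist a b ≤ C := by
    obtain ⟨C, hC⟩ := Metric.isBounded_iff.mp ((isCompact_univ : IsCompact (Set.univ : Set X)).isBounded)
    exact ⟨C, fun a b => hC (mem_univ a) (mem_univ b)⟩
  have hD0 : 0 ≤ D := le_trans dist_nonneg (hD x x)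
  -- uniform continuity
  obtain ⟨ε, hε, hunif⟩ := Metric.uniformContinuous_iff.mp
    (CompactSpace.uniformContinuous_of_continuous hf) δ hδ
  have hunif' : ∀ a b : X, dist a b < ε → dist (f a) (f b) ≤ δ := fun a b h => (hunif h).le
  -- backward orbit through y
  obtain ⟨sec, hsec⟩ : ∃ s : X → X, ∀ a, f (s a) = a :=
    ⟨fun a => (hsurj a).choose, fun a => (hsurj a).choose_spec⟩
  set g : ℕ → X := fun n => sec^[n] y with hgdef
  have hg0 : g 0 = y := rfl
  have hg : ∀ k, f (g (k + 1)) = g k := by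
    intro k
    show f (sec^[k + 1] y) = sec^[k] y
    rw [Function.iterate_succ_apply' sec k y, hsec]
  -- apply the AASP to the pseudo-orbit
  obtain ⟨p, hp⟩ := haasp (pz f x y g) (pz_avg_tendsto f x y g hg hD0 hD)
  -- bad set has density zero
  have hbad := markov_tendsto (fun i => dist (f^[i] p) (pz f x y g i))
    (fun i => dist_nonneg) hε hp
  have hev := hbad.eventually (gt_mem_nhds (show (0 : ℝ) < 1 / 14 by norm_num))
  rw [Filter.eventually_atTop] at hev
  obtain ⟨n₀, hn₀⟩ := hev
  set n := n₀ + 1 with hn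
  set t := stT n with ht
  have ht1 : 1 ≤ t := le_trans (by omega) (stT_le_self n)
  set M := t + 1 with hM
  have hstT1 : stT (n + 1) = t + (6 * M + 1) := by rw [ht, stT_succ]; omega
  -- every window of length t inside stage n contains a good index
  have hgood : ∀ lo, t ≤ lo → lo + t ≤ stT (n + 1) →
      ∃ i, lo ≤ i ∧ i < lo + t ∧ dist (f^[i] p) (pz f x y g i) < ε := by
    intro lo hlo1 hlo2
    by_contra hcon
    push_neg at hcon
    have hsub : Finset.Ico lo (lo + t) ⊆
        (Finset.range (stT (n + 1))).filter
          (fun i => ε ≤ dist (f^[i] p) (pz f x y g i)) := by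
      intro i hi
      simp only [Finset.mem_Ico] at hi
      simp only [Finset.mem_filter, Finset.mem_range]
      exact ⟨by omega, hcon i hi.1 hi.2⟩
    have hcardn : t ≤ ((Finset.range (stT (n + 1))).filter
        (fun i => ε ≤ dist (f^[i] p) (pz f x y g i))).card := by
      have h := Finset.card_le_card hsub
      rw [Nat.card_Ico] at h
      omega
    have hlt := hn₀ (stT (n + 1)) (by have := stT_le_self (n + 1); omega)
    have hTpos : (0 : ℝ) < (stT (n + 1) : ℕ) := by
      have : 1 ≤ stT (n + 1) := by omega
      exact_mod_cast this
    rw [div_lt_iff₀ hTpos] at hlt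
    have hc1 : (t : ℝ) ≤ (((Finset.range (stT (n + 1))).filter
        (fun i => ε ≤ dist (f^[i] p) (pz f x y g i))).card : ℝ) := by exact_mod_cast hcardn
    have hc2 : ((stT (n + 1) : ℕ) : ℝ) = 7 * (t : ℝ) + 7 := by
      rw [show stT (n + 1) = 7 * t + 7 from by rw [ht, stT_succ]]
      push_cast; ring
    have ht1R : (1 : ℝ) ≤ (t : ℝ) := by exact_mod_cast ht1
    nlinarith [hc1, hlt, hc2, ht1R]
  -- pick good indices in the six windows
  obtain ⟨a, ha1, ha2, ha⟩ := hgood t le_rfl (by omega)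
  obtain ⟨b, hb1, hb2, hb⟩ := hgood (t + M) (by omega) (by omega)
  obtain ⟨c2, hc21, hc22, hc2p⟩ := hgood (t + 2 * M) (by omega) (by omega)
  obtain ⟨d, hd1, hd2, hdp⟩ := hgood (t + 3 * M) (by omega) (by omega)
  obtain ⟨e, he1, he2, hep⟩ := hgood (t + 4 * M) (by omega) (by omega)
  obtain ⟨b', hb'1, hb'2, hb'p⟩ := hgood (t + 5 * M) (by omega) (by omega)
  -- evaluate the pseudo-orbit at the good indices
  have heval : ∀ r, r < 6 * M + 1 → pz f x y g (t + r) = blockV f x y g M r := by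
    intro r hr
    rw [ht, hM]
    exact pz_eval f x y g (by omega)
  have hza : pz f x y g a = f^[a - t] x := by
    have h := heval (a - t) (by omega)
    rw [show t + (a - t) = a by omega] at h
    rw [h, blockV0 f x y g (by omega)]
  have hzb : pz f x y g b = g (2 * M - 1 - (b - t)) := by
    have h := heval (b - t) (by omega)
    rw [show t + (b - t) = b by omega] at h
    rw [h, blockV1 f x y g (by omega) (by omega)]
  have hzc2 : pz f x y g c2 = f^[c2 - t - 2 * M] y := by
    have h := heval (c2 - t) (by omega)
    rw [show t + (c2 - t) = c2 by omega] at h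
    rw [h, blockV2 f x y g (by omega) (by omega)]
  have hzd : pz f x y g d = g (4 * M - 1 - (d - t)) := by
    have h := heval (d - t) (by omega)
    rw [show t + (d - t) = d by omega] at h
    rw [h, blockV3 f x y g (by omega) (by omega)]
  have hze : pz f x y g e = f^[e - t - 4 * M] y := by
    have h := heval (e - t) (by omega)
    rw [show t + (e - t) = e by omega] at h
    rw [h, blockV4 f x y g (by omega) (by omega)]
  have hzb' : pz f x y g b' = g (6 * M - (b' - t)) := by
    have h := heval (b' - t) (by omega)
    rw [show t + (b' - t) = b' by omega] at h
    rw [h, blockV5 f x y g (by omega)]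
  rw [hza] at ha
  rw [hzb] at hb
  rw [hzc2] at hc2p
  rw [hzd] at hdp
  rw [hze] at hep
  rw [hzb'] at hb'p
  -- the three chains
  set m := 2 * M - 1 with hm
  have hchainXY : ∃ c : ℕ → X, c 0 = x ∧ c m = y ∧
      ∀ i < m, dist (f (c i)) (c (i + 1)) ≤ δ := by
    have hcb := buildChain f hδ.le hunif' hg p x (show a < b by omega)
      (show 1 ≤ 2 * M - 1 - (b - t) by omega) ha hb
    rw [show (a - t) + (b - a) + (2 * M - 1 - (b - t)) = m by omega, hg0] at hcb
    exact hcb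
  have hloop1 : ∃ c : ℕ → X, c 0 = y ∧ c m = y ∧
      ∀ i < m, dist (f (c i)) (c (i + 1)) ≤ δ := by
    have hcb := buildChain f hδ.le hunif' hg p y (show c2 < d by omega)
      (show 1 ≤ 4 * M - 1 - (d - t) by omega) hc2p hdp
    rw [show (c2 - t - 2 * M) + (d - c2) + (4 * M - 1 - (d - t)) = m by omega, hg0] at hcb
    exact hcb
  have hloop2 : ∃ c : ℕ → X, c 0 = y ∧ c (m + 1) = y ∧
      ∀ i < m + 1, dist (f (c i)) (c (i + 1)) ≤ δ := by
    have hcb := buildChain f hδ.le hunif' hg p y (show e < b' by omega)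
      (show 1 ≤ 6 * M - (b' - t) by omega) hep hb'p
    rw [show (e - t - 4 * M) + (b' - e) + (6 * M - (b' - t)) = m + 1 by omega, hg0] at hcb
    exact hcb
  -- numerics: all k ≥ m*m + m are sums m + α*m + β*(m+1)
  refine ⟨m * m + m, ?_⟩
  intro k hk
  have hmpos : 0 < m := by omega
  set n' := k - m with hn'
  have hn'ge : m * m ≤ n' := Nat.le_sub_of_add_le hk
  set q := n' / m with hq
  set r := n' % m with hr
  have hrm : r < m := Nat.mod_lt _ hmpos
  have hqm : m ≤ q := (Nat.le_div_iff_mul_le hmpos).2 hn'ge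
  have hrq : r ≤ q := le_trans hrm.le hqm
  have hrep : (q - r) * m + r * (m + 1) = n' := by
    have hdm := Nat.div_add_mod n' m
    calc (q - r) * m + r * (m + 1) = ((q - r) * m + r * m) + r := by ring
      _ = q * m + r := by rw [← Nat.add_mul, Nat.sub_add_cancel hrq]
      _ = n' := by rw [Nat.mul_comm]; exact hdm
  have hα := chain_pow f δ hloop1 (q - r)
  have hβ := chain_pow f δ hloop2 r
  have hloops := chain_concat f δ hα hβ
  rw [hrep] at hloops
  have hfinal := chain_concat f δ hchainXY hloops
  rw [show m + n' = k by omega] at hfinal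
  exact hfinal
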